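/- Let α > 0 and define g_α : ℕ → ℕ by g_α(ℓ) = ⌊2^{α·ℓ·log₂ ℓ}⌋ for ℓ ≥ 2 and g_α(0) = g_α(1) = 1. Then Φ_{g_α}(n) = Ω(n^{1/(1+α)}); that is, there exist a constant c > 0 and N ∈ ℕ such that Φ_{g_α}(n) ≥ c·n^{1/(1+α)} for every integer n ≥ N. -/

import Mathlib

open Real Finset

/-- `Φ_g(n) = max_{0 ≤ ℓ ≤ n/4, ℓ ∈ ℕ} (ℓ·log₂(n/(4ℓ)) − log₂ g(ℓ))`.
(For `ℓ = 0` the first summand vanishes, so the term is `−log₂ g(0)`,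
matching the convention `x/0 = 0`, `log₂ 0 = 0` of Lean.) -/
noncomputable def Phi (g : ℕ → ℕ) (n : ℕ) : ℝ :=
  (Finset.range (n / 4 + 1)).sup' (Finset.nonempty_range_iff.mpr (by omega))
    fun ℓ => (ℓ : ℝ) * Real.logb 2 ((n : ℝ) / (4 * ℓ)) - Real.logb 2 (g ℓ)

/-- Lemma 6.5: for `g_α(ℓ) = ⌊2^{α·ℓ·log₂ ℓ}⌋` (with
`g_α(0) = g_α(1) = 1`), we have `Φ_{g_α}(n) = Ω(n^{1/(1+α)})`. -/
theorem stmt17 (α : ℝ) (hα : 0 < α) (g : ℕ → ℕ)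
    (hg : ∀ ℓ : ℕ, 2 ≤ ℓ →
      g ℓ = Nat.floor ((2 : ℝ) ^ (α * (ℓ : ℝ) * Real.logb 2 (ℓ : ℝ))))
    (hg0 : g 0 = 1) (hg1 : g 1 = 1) :
    ∃ c : ℝ, 0 < c ∧ ∃ N : ℕ, ∀ n : ℕ, N ≤ n →
      c * (n : ℝ) ^ (1 / (1 + α)) ≤ Phi g n := by
  have h1α : (0:ℝ) < 1 + α := by linarith
  set p : ℝ := 1 / (1 + α) with hp_def
  have hp : 0 < p := by positivity
  have hp1 : p ≤ 1 := by
    rw [hp_def, div_le_one h1α]; linarith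
  have hpinv : (1 + α) * p = 1 := by
    rw [hp_def, mul_one_div_cancel h1α.ne']
  refine ⟨(1/2) * (1/8:ℝ) ^ p, by positivity, ⌈8 * (4:ℝ) ^ (1 + α)⌉₊ + 8, ?_⟩
  intro n hn
  have hn8 : (4:ℝ) ^ (1 + α) ≤ (n:ℝ) / 8 := by
    have h1 : (8 * (4:ℝ) ^ (1 + α)) ≤ (⌈8 * (4:ℝ) ^ (1 + α)⌉₊ : ℝ) := Nat.le_ceil _
    have h2 : ((⌈8 * (4:ℝ) ^ (1 + α)⌉₊ : ℕ) : ℝ) ≤ (n : ℝ) := by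
      exact_mod_cast le_trans (Nat.le_add_right _ 8) hn
    linarith
  have hnn : (0:ℝ) ≤ (n:ℝ) / 8 := le_trans (by positivity) hn8
  set x : ℝ := ((n:ℝ) / 8) ^ p with hx_def
  have hx0 : 0 ≤ x := Real.rpow_nonneg hnn p
  have hx4 : (4:ℝ) ≤ x := by
    have := Real.rpow_le_rpow (by positivity) hn8 hp.le
    rwa [← Real.rpow_mul (by norm_num), hpinv, Real.rpow_one] at this
  set L : ℕ := ⌊x⌋₊ with hL_def
  have hL4 : 4 ≤ L := Nat.le_floor hx4
  have hLx : (L:ℝ) ≤ x := Nat.floor_le hx0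
  have hLge : x - 1 ≤ (L:ℝ) := le_of_lt (Nat.sub_one_lt_floor x)
  have hLpos : (0:ℝ) < L := by positivity
  have hLpow : (L:ℝ) ^ (1 + α) ≤ (n:ℝ) / 8 := by
    have := Real.rpow_le_rpow hLpos.le hLx h1α.le
    rwa [hx_def, ← Real.rpow_mul hnn, mul_comm p (1+α), hpinv, Real.rpow_one] at this
  -- L is in range
  have h1n8 : (1:ℝ) ≤ (n:ℝ) / 8 :=
    le_trans (Real.one_le_rpow (by norm_num) h1α.le) hn8
  have hxle : x ≤ (n:ℝ) / 8 := by
    calc x ≤ ((n:ℝ)/8) ^ (1:ℝ) := Real.rpow_le_rpow_of_exponent_le h1n8 hp1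
    _ = (n:ℝ)/8 := Real.rpow_one _
  have h8L : 8 * L ≤ n := by
    have : (8 * (L:ℝ)) ≤ (n:ℝ) := by
      have := hLx.trans hxle; linarith
    exact_mod_cast this
  have hmem : L ∈ Finset.range (n / 4 + 1) := by
    rw [Finset.mem_range]; omega
  -- key bound on g L
  have hlogL : 0 ≤ Real.logb 2 (L:ℝ) := Real.logb_nonneg one_lt_two (by exact_mod_cast hL4.trans' (by norm_num))
  have hE : 0 ≤ α * (L:ℝ) * Real.logb 2 (L:ℝ) := by positivity
  have hgL : Real.logb 2 (g L : ℝ) ≤ α * (L:ℝ) * Real.logb 2 (L:ℝ) := by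
    rw [hg L (by omega)]
    have hfl : ((⌊(2:ℝ) ^ (α * (L:ℝ) * Real.logb 2 (L:ℝ))⌋₊ : ℕ) : ℝ)
        ≤ (2:ℝ) ^ (α * (L:ℝ) * Real.logb 2 (L:ℝ)) := Nat.floor_le (by positivity)
    have h1 : (1:ℕ) ≤ ⌊(2:ℝ) ^ (α * (L:ℝ) * Real.logb 2 (L:ℝ))⌋₊ := by
      apply Nat.le_floor
      simpa using Real.one_le_rpow one_le_two hE
    calc Real.logb 2 _ ≤ Real.logb 2 ((2:ℝ) ^ (α * (L:ℝ) * Real.logb 2 (L:ℝ))) := by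
          apply Real.logb_le_logb_of_le one_lt_two _ hfl
          exact_mod_cast h1
      _ = α * (L:ℝ) * Real.logb 2 (L:ℝ) := Real.logb_rpow (by norm_num) (by norm_num)
  -- key bound on the log term
  have hdiv : (2:ℝ) * (L:ℝ) ^ α ≤ (n:ℝ) / (4 * L) := by
    rw [le_div_iff₀ (by positivity)]
    have hsplit : (L:ℝ) ^ (1 + α) = (L:ℝ) * (L:ℝ) ^ α := by
      rw [Real.rpow_add hLpos, Real.rpow_one]
    nlinarith [hLpow]
  have hlogdiv : 1 + α * Real.logb 2 (L:ℝ) ≤ Real.logb 2 ((n:ℝ) / (4 * L)) := by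
    have h2L : Real.logb 2 ((2:ℝ) * (L:ℝ) ^ α) ≤ Real.logb 2 ((n:ℝ) / (4 * L)) :=
      Real.logb_le_logb_of_le one_lt_two (by positivity) hdiv
    rwa [Real.logb_mul (by norm_num) (by positivity), Real.logb_self_eq_one (by norm_num : (1:ℝ) < 2),
      Real.logb_rpow_eq_mul_logb_of_pos hLpos] at h2L
  -- conclude
  have hterm : (L:ℝ) ≤ (L:ℝ) * Real.logb 2 ((n:ℝ) / (4 * L)) - Real.logb 2 (g L : ℝ) := by
    have : (L:ℝ) * (1 + α * Real.logb 2 (L:ℝ)) ≤ (L:ℝ) * Real.logb 2 ((n:ℝ) / (4 * L)) :=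
      mul_le_mul_of_nonneg_left hlogdiv hLpos.le
    nlinarith
  have hPhi : (L:ℝ) ≤ Phi g n := by
    refine le_trans hterm ?_
    exact Finset.le_sup' (fun ℓ : ℕ => (ℓ : ℝ) * Real.logb 2 ((n : ℝ) / (4 * ℓ)) - Real.logb 2 (g ℓ)) hmem
  have hcx : (1/2) * (1/8:ℝ) ^ p * (n:ℝ) ^ p ≤ (L:ℝ) := by
    have hx8 : (1/8:ℝ) ^ p * (n:ℝ) ^ p = x := by
      rw [hx_def, ← Real.mul_rpow (by norm_num) (Nat.cast_nonneg n)]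
      ring_nf
    have : (1/2) * x ≤ x - 1 := by linarith
    calc (1/2) * (1/8:ℝ) ^ p * (n:ℝ) ^ p = (1/2) * x := by rw [mul_assoc, hx8]
      _ ≤ (L:ℝ) := le_trans this hLge
  linarith
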